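/- For every integer l ≥ 2, the continuous multinomial coefficient x ↦ {x} is a real-analytic function on ℝ^l. -/

import Mathlib

/-- A word `w : Fin n → Fin l` is a Smirnov word if no two consecutive letters
are equal. -/
def IsSmirnov {l n : ℕ} (w : Fin n → Fin l) : Prop :=
  ∀ i : Fin n, ∀ h : (i : ℕ) + 1 < n, w i ≠ w ⟨(i : ℕ) + 1, h⟩

/-- `kcount w j` is the number of occurrences of the letter `j` in the word `w`. -/
noncomputable def kcount {l n : ℕ} (w : Fin n → Fin l) (j : Fin l) : ℕ :=
  Nat.card {i : Fin n // w i = j}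

/-- The continuous multinomial coefficient
`{x} = Σ_{n≥l} Σ_w Π_{j=1}^l x_j^{k_j(w)−1}/(k_j(w)−1)!`, the inner sum ranging
over all Smirnov words of length `n` over `{1,…,l}` in which every letter
occurs at least once. -/
noncomputable def contMultinomial (l : ℕ) (x : Fin l → ℝ) : ℝ :=
  ∑' p : Σ n : ℕ, {w : Fin n → Fin l // IsSmirnov w ∧ Function.Surjective w},
    ∏ j : Fin l, x j ^ (kcount p.2.1 j - 1) / (Nat.factorial (kcount p.2.1 j - 1) : ℝ)

/-! ### Auxiliary material -/

section Aux

/-- The multinomial bound: `m! ≤ l^m * ∏ (a j)!` whenever `∑ a j = m`. -/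
private lemma factorial_sum_le (l : ℕ) (hl : 0 < l) :
    ∀ (m : ℕ) (a : Fin l → ℕ), (∑ j, a j) = m →
      Nat.factorial m ≤ l ^ m * ∏ j, Nat.factorial (a j) := by
  intro m
  induction m with
  | zero =>
    intro a _
    have h1 : (1 : ℕ) ≤ ∏ j, Nat.factorial (a j) :=
      Finset.one_le_prod' fun j _ => (a j).factorial_pos
    simpa using h1
  | succ m ih =>
    intro a ha
    obtain ⟨j₀, -, hj₀⟩ := Finset.exists_max_image (Finset.univ : Finset (Fin l)) a
      ⟨⟨0, hl⟩, Finset.mem_univ _⟩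
    have hpos : 0 < a j₀ := by
      rcases Nat.eq_zero_or_pos (a j₀) with h | h
      · exfalso
        have hz : ∑ j, a j = 0 := Finset.sum_eq_zero fun j _ =>
          Nat.le_zero.mp (h ▸ hj₀ j (Finset.mem_univ j))
        omega
      · exact h
    have hml : m + 1 ≤ l * a j₀ := by
      calc m + 1 = ∑ j, a j := ha.symm
        _ ≤ ∑ _j : Fin l, a j₀ := Finset.sum_le_sum fun j _ => hj₀ j (Finset.mem_univ j)
        _ = l * a j₀ := by simp [mul_comm]
    set a' : Fin l → ℕ := Function.update a j₀ (a j₀ - 1) with ha'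
    have hkey : a j₀ + ∑ j ∈ Finset.univ \ {j₀}, a j = m + 1 := by
      rw [← Finset.erase_eq, Finset.add_sum_erase _ a (Finset.mem_univ j₀)]
      exact ha
    have hsum' : ∑ j, a' j = m := by
      rw [ha', Finset.sum_update_of_mem (Finset.mem_univ j₀)]
      omega
    have hIH := ih a' hsum'
    have hprod : a j₀ * ∏ j, Nat.factorial (a' j) = ∏ j, Nat.factorial (a j) := by
      have h1 : (fun j => Nat.factorial (a' j))
          = Function.update (fun j => Nat.factorial (a j)) j₀ (Nat.factorial (a j₀ - 1)) := by
        funext j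
        rcases eq_or_ne j j₀ with rfl | h
        · simp [ha']
        · simp [ha', Function.update_of_ne h]
      rw [h1, Finset.prod_update_of_mem (Finset.mem_univ j₀)]
      have h2 : (∏ j ∈ Finset.univ \ {j₀}, Nat.factorial (a j)) * Nat.factorial (a j₀)
          = ∏ j, Nat.factorial (a j) := by
        rw [← Finset.erase_eq, Finset.prod_erase_mul _ _ (Finset.mem_univ j₀)]
      have h3 : a j₀ * Nat.factorial (a j₀ - 1) = Nat.factorial (a j₀) := by
        obtain ⟨k, hk⟩ : ∃ k, a j₀ = k + 1 := ⟨a j₀ - 1, by omega⟩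
        rw [hk]
        simp [Nat.factorial_succ]
      calc a j₀ * (Nat.factorial (a j₀ - 1) * ∏ j ∈ Finset.univ \ {j₀}, Nat.factorial (a j))
          = (∏ j ∈ Finset.univ \ {j₀}, Nat.factorial (a j)) * (a j₀ * Nat.factorial (a j₀ - 1)) := by
            ring
        _ = ∏ j, Nat.factorial (a j) := by rw [h3, h2]
    calc Nat.factorial (m + 1) = (m + 1) * Nat.factorial m := Nat.factorial_succ m
      _ ≤ (l * a j₀) * (l ^ m * ∏ j, Nat.factorial (a' j)) := Nat.mul_le_mul hml hIH
      _ = l ^ (m + 1) * (a j₀ * ∏ j, Nat.factorial (a' j)) := by ring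
      _ = l ^ (m + 1) * ∏ j, Nat.factorial (a j) := by rw [hprod]

/-- Given prescribed fiber sizes summing to `m`, there is a function with those fibers. -/
private lemma exists_fun_card (l m : ℕ) (a : Fin l → ℕ) (ha : ∑ j, a j = m) :
    ∃ f : Fin m → Fin l, ∀ j, Nat.card {i : Fin m // f i = j} = a j := by
  have hcard : Fintype.card (Σ j : Fin l, Fin (a j)) = m := by
    simp [ha]
  let e : (Σ j : Fin l, Fin (a j)) ≃ Fin m := Fintype.equivFinOfCardEq hcard
  refine ⟨fun i => (e.symm i).1, fun j => ?_⟩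
  rw [Nat.card_eq_fintype_card, ← Fintype.card_fin (a j)]
  have e1 : {i : Fin m // (e.symm i).1 = j} ≃ {p : Σ j' : Fin l, Fin (a j') // p.1 = j} :=
    Equiv.subtypeEquiv e.symm fun i => Iff.rfl
  have e2 : {p : Σ j' : Fin l, Fin (a j') // p.1 = j} ≃ Fin (a j) :=
    { toFun := fun p => Fin.cast (congrArg a p.2) p.1.2
      invFun := fun q => ⟨⟨j, q⟩, rfl⟩
      left_inv := by rintro ⟨⟨j', q⟩, rfl⟩; rfl
      right_inv := fun q => rfl }
  exact Fintype.card_congr (e1.trans e2)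

private lemma sum_kcount {l n : ℕ} (w : Fin n → Fin l) : ∑ j, kcount w j = n := by
  classical
  have h := Nat.card_congr (Equiv.sigmaFiberEquiv w)
  rw [Nat.card_eq_fintype_card, Nat.card_eq_fintype_card, Fintype.card_sigma,
    Fintype.card_fin] at h
  simpa [kcount, Nat.card_eq_fintype_card] using h

private lemma kcount_pos {l n : ℕ} {w : Fin n → Fin l} (hw : Function.Surjective w)
    (j : Fin l) : 0 < kcount w j := by
  obtain ⟨i, hi⟩ := hw j
  have : Nonempty {i : Fin n // w i = j} := ⟨⟨i, hi⟩⟩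
  exact Nat.card_pos

private lemma le_of_surj {l n : ℕ} {w : Fin n → Fin l} (hw : Function.Surjective w) :
    l ≤ n := by
  simpa using Fintype.card_le_of_surjective w hw

private lemma sum_kcount_sub_one {l m : ℕ} {w : Fin (m + l) → Fin l}
    (hw : Function.Surjective w) : ∑ j, (kcount w j - 1) = m := by
  rw [Finset.sum_tsub_distrib _ fun j _ => kcount_pos hw j]
  rw [sum_kcount]
  simp

/-- The monomial continuous multilinear map attached to `f : Fin m → Fin l`. -/
private noncomputable def wordMap {l : ℕ} (m : ℕ) (f : Fin m → Fin l) :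
    ContinuousMultilinearMap ℝ (fun _ : Fin m => (Fin l → ℝ)) ℝ :=
  (ContinuousMultilinearMap.mkPiAlgebra ℝ (Fin m) ℝ).compContinuousLinearMap
    fun i => ContinuousLinearMap.proj (f i)

private lemma wordMap_apply {l : ℕ} (m : ℕ) (f : Fin m → Fin l) (x : Fin l → ℝ) :
    wordMap m f (fun _ => x) = ∏ j, x j ^ Nat.card {i : Fin m // f i = j} := by
  classical
  have h1 : wordMap m f (fun _ => x) = ∏ i, x (f i) := by
    simp [wordMap]
  rw [h1, ← Finset.prod_fiberwise_of_maps_to'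
    (fun i (_ : i ∈ Finset.univ) => Finset.mem_univ (f i)) x]
  refine Finset.prod_congr rfl fun j _ => ?_
  rw [Finset.prod_const]
  congr 1
  rw [Nat.card_eq_fintype_card, Fintype.card_subtype]

private lemma norm_wordMap_le {l : ℕ} (m : ℕ) (f : Fin m → Fin l) : ‖wordMap m f‖ ≤ 1 := by
  refine le_trans (ContinuousMultilinearMap.norm_compContinuousLinearMap_le _ _) ?_
  rw [ContinuousMultilinearMap.norm_mkPiAlgebra, one_mul]
  refine Finset.prod_le_one (fun i _ => norm_nonneg _) fun i _ => ?_
  refine ContinuousLinearMap.opNorm_le_bound _ zero_le_one fun y => ?_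
  rw [one_mul]
  exact norm_le_pi_norm y (f i)

/-- The type of surjective Smirnov words of length `n`. -/
private abbrev SWord (l n : ℕ) := {w : Fin n → Fin l // IsSmirnov w ∧ Function.Surjective w}

noncomputable instance (l n : ℕ) : Fintype (SWord l n) := Fintype.ofFinite _

private lemma sword_isEmpty {l n : ℕ} (h : n < l) : IsEmpty (SWord l n) :=
  ⟨fun w => absurd (le_of_surj w.2.2) (not_le.mpr h)⟩

private lemma sword_sum {l : ℕ} (m : ℕ) (w : SWord l (m + l)) :
    ∑ j, (kcount w.1 j - 1) = m :=
  sum_kcount_sub_one w.2.2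

/-- A choice of a function `Fin m → Fin l` whose fiber over `j` has `kcount w j - 1`
elements. -/
private noncomputable def chooseF {l : ℕ} (m : ℕ) (w : SWord l (m + l)) : Fin m → Fin l :=
  (exists_fun_card l m (fun j => kcount w.1 j - 1) (sword_sum m w)).choose

private lemma chooseF_spec {l : ℕ} (m : ℕ) (w : SWord l (m + l)) (j : Fin l) :
    Nat.card {i : Fin m // chooseF m w i = j} = kcount w.1 j - 1 :=
  (exists_fun_card l m (fun j => kcount w.1 j - 1) (sword_sum m w)).choose_spec j

/-- The formal multilinear series of the continuous multinomial coefficient. -/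
private noncomputable def cmSeries (l : ℕ) : FormalMultilinearSeries ℝ (Fin l → ℝ) ℝ :=
  fun m => ∑ w : SWord l (m + l),
    (∏ j, ((Nat.factorial (kcount w.1 j - 1) : ℝ))⁻¹) • wordMap m (chooseF m w)

private lemma cmSeries_apply (l m : ℕ) (x : Fin l → ℝ) :
    (cmSeries l m) (fun _ => x) = ∑ w : SWord l (m + l),
      ∏ j, x j ^ (kcount w.1 j - 1) / (Nat.factorial (kcount w.1 j - 1) : ℝ) := by
  rw [cmSeries, ContinuousMultilinearMap.sum_apply]
  refine Finset.sum_congr rfl fun w _ => ?_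
  rw [ContinuousMultilinearMap.smul_apply, wordMap_apply, smul_eq_mul]
  simp only [chooseF_spec]
  rw [← Finset.prod_mul_distrib]
  refine Finset.prod_congr rfl fun j _ => ?_
  rw [div_eq_mul_inv, mul_comm]

/-- The basic coefficient bound. -/
private lemma coeff_le {l m : ℕ} (hl : 0 < l) (a : Fin l → ℕ) (hsa : ∑ j, a j = m) :
    ∏ j, ((Nat.factorial (a j) : ℝ))⁻¹ ≤ (l : ℝ) ^ m / Nat.factorial m := by
  have hkey : (Nat.factorial m : ℝ) ≤ (l : ℝ) ^ m * ∏ j, (Nat.factorial (a j) : ℝ) := by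
    exact_mod_cast factorial_sum_le l hl m a hsa
  have h2 : (Nat.factorial m : ℝ) / (l : ℝ) ^ m ≤ ∏ j, (Nat.factorial (a j) : ℝ) := by
    rw [div_le_iff₀ (by positivity)]
    nlinarith [hkey]
  have hpos : (0 : ℝ) < (Nat.factorial m : ℝ) / (l : ℝ) ^ m := by positivity
  have h3 := inv_anti₀ hpos h2
  rw [← Finset.prod_inv_distrib] at h3
  rw [inv_div] at h3
  exact h3

/-- The pointwise bound on each summand. -/
private lemma term_bound {l n : ℕ} (hl : 0 < l) (x : Fin l → ℝ) (w : Fin n → Fin l)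
    (hw : Function.Surjective w) {m : ℕ} (hn : n = m + l) :
    |∏ j, x j ^ (kcount w j - 1) / (Nat.factorial (kcount w j - 1) : ℝ)|
      ≤ (‖x‖ + 1) ^ m * ((l : ℝ) ^ m / Nat.factorial m) := by
  subst hn
  set M : ℝ := ‖x‖ + 1 with hM
  have hM1 : (1 : ℝ) ≤ M := le_add_of_nonneg_left (norm_nonneg x)
  have hMx : ∀ j, |x j| ≤ M := fun j => by
    have h1 : ‖x j‖ ≤ ‖x‖ := norm_le_pi_norm x j
    rw [Real.norm_eq_abs] at h1
    exact h1.trans (le_add_of_nonneg_right zero_le_one)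
  have hsa : ∑ j, (kcount w j - 1) = m := sum_kcount_sub_one hw
  calc |∏ j, x j ^ (kcount w j - 1) / (Nat.factorial (kcount w j - 1) : ℝ)|
      = ∏ j, |x j| ^ (kcount w j - 1) / (Nat.factorial (kcount w j - 1) : ℝ) := by
        rw [Finset.abs_prod]
        exact Finset.prod_congr rfl fun j _ => by
          rw [abs_div, abs_pow, Nat.abs_cast]
    _ ≤ ∏ j, M ^ (kcount w j - 1) / (Nat.factorial (kcount w j - 1) : ℝ) := by
        refine Finset.prod_le_prod (fun j _ => by positivity) fun j _ => ?_
        have hf : (0:ℝ) < (Nat.factorial (kcount w j - 1) : ℝ) := by positivity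
        exact (div_le_div_iff_of_pos_right hf).mpr (pow_le_pow_left₀ (abs_nonneg _) (hMx j) _)
    _ = M ^ m * ∏ j, ((Nat.factorial (kcount w j - 1) : ℝ))⁻¹ := by
        rw [Finset.prod_div_distrib, Finset.prod_pow_eq_pow_sum, hsa,
          div_eq_mul_inv, ← Finset.prod_inv_distrib]
    _ ≤ M ^ m * ((l : ℝ) ^ m / Nat.factorial m) := by
        refine mul_le_mul_of_nonneg_left ?_ (by positivity)
        exact coeff_le hl _ hsa

private lemma card_sword_le (l n : ℕ) : (Nat.card (SWord l n) : ℝ) ≤ (l : ℝ) ^ n := by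
  have h1 : Nat.card (SWord l n) ≤ Nat.card (Fin n → Fin l) :=
    Nat.card_le_card_of_injective _ Subtype.val_injective
  have h2 : Nat.card (Fin n → Fin l) = l ^ n := by
    simp [Nat.card_eq_fintype_card]
  calc (Nat.card (SWord l n) : ℝ) ≤ (Nat.card (Fin n → Fin l) : ℝ) := by exact_mod_cast h1
    _ = (l : ℝ) ^ n := by rw [h2]; push_cast; ring

private lemma norm_cmSeries_le (l : ℕ) (hl : 0 < l) (m : ℕ) :
    ‖cmSeries l m‖ ≤ (l : ℝ) ^ (m + l) * ((l : ℝ) ^ m / Nat.factorial m) := by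
  refine le_trans (norm_sum_le _ _) ?_
  have hterm : ∀ w : SWord l (m + l),
      ‖(∏ j, ((Nat.factorial (kcount w.1 j - 1) : ℝ))⁻¹) • wordMap m (chooseF m w)‖
        ≤ (l : ℝ) ^ m / Nat.factorial m := by
    intro w
    rw [norm_smul (∏ j, ((Nat.factorial (kcount w.1 j - 1) : ℝ))⁻¹) (wordMap m (chooseF m w))]
    have h1 : ‖∏ j, ((Nat.factorial (kcount w.1 j - 1) : ℝ))⁻¹‖
        = ∏ j, ((Nat.factorial (kcount w.1 j - 1) : ℝ))⁻¹ := by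
      rw [Real.norm_eq_abs, abs_of_nonneg]
      positivity
    calc ‖∏ j, ((Nat.factorial (kcount w.1 j - 1) : ℝ))⁻¹‖ * ‖wordMap m (chooseF m w)‖
        ≤ ‖∏ j, ((Nat.factorial (kcount w.1 j - 1) : ℝ))⁻¹‖ * 1 :=
          mul_le_mul_of_nonneg_left (norm_wordMap_le m _) (norm_nonneg _)
      _ = ∏ j, ((Nat.factorial (kcount w.1 j - 1) : ℝ))⁻¹ := by rw [mul_one, h1]
      _ ≤ (l : ℝ) ^ m / Nat.factorial m := coeff_le hl _ (sword_sum m w)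
  calc ∑ w : SWord l (m + l),
        ‖(∏ j, ((Nat.factorial (kcount w.1 j - 1) : ℝ))⁻¹) • wordMap m (chooseF m w)‖
      ≤ ∑ _w : SWord l (m + l), (l : ℝ) ^ m / Nat.factorial m :=
        Finset.sum_le_sum fun w _ => hterm w
    _ = (Fintype.card (SWord l (m + l)) : ℝ) * ((l : ℝ) ^ m / Nat.factorial m) := by
        rw [Finset.sum_const, nsmul_eq_mul, Finset.card_univ]
    _ ≤ (l : ℝ) ^ (m + l) * ((l : ℝ) ^ m / Nat.factorial m) := by
        refine mul_le_mul_of_nonneg_right ?_ (by positivity)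
        rw [← Nat.card_eq_fintype_card]
        exact card_sword_le l (m + l)

private lemma radius_cm (l : ℕ) (hl : 0 < l) : (cmSeries l).radius = ⊤ := by
  apply FormalMultilinearSeries.radius_eq_top_of_summable_norm
  intro r
  refine Summable.of_nonneg_of_le (fun n => by positivity) (fun m => ?_)
    (((Real.summable_pow_div_factorial ((l : ℝ) ^ 2 * r)).mul_left ((l : ℝ) ^ l)))
  calc ‖cmSeries l m‖ * (r : ℝ) ^ m
      ≤ ((l : ℝ) ^ (m + l) * ((l : ℝ) ^ m / Nat.factorial m)) * (r : ℝ) ^ m :=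
        mul_le_mul_of_nonneg_right (norm_cmSeries_le l hl m) (by positivity)
    _ = (l : ℝ) ^ l * (((l : ℝ) ^ 2 * r) ^ m / Nat.factorial m) := by
        have hp : (((l : ℝ) ^ 2) : ℝ) ^ m = (l : ℝ) ^ m * (l : ℝ) ^ m := by
          rw [← pow_mul, two_mul, pow_add]
        have hfact : (Nat.factorial m : ℝ) ≠ 0 := by positivity
        rw [pow_add, mul_pow, hp]
        field_simp
  
private lemma summable_T (l : ℕ) (hl : 0 < l) (x : Fin l → ℝ) :
    Summable (fun p : Σ n : ℕ, SWord l n =>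
      ∏ j, x j ^ (kcount p.2.1 j - 1) / (Nat.factorial (kcount p.2.1 j - 1) : ℝ)) := by
  apply Summable.of_norm
  rw [summable_sigma_of_nonneg (fun p => norm_nonneg _)]
  constructor
  · intro n
    exact (hasSum_fintype _).summable
  · rw [← summable_nat_add_iff l]
    refine Summable.of_nonneg_of_le
      (fun m => tsum_nonneg fun w => norm_nonneg _) (fun m => ?_)
      (((Real.summable_pow_div_factorial ((l : ℝ) ^ 2 * (‖x‖ + 1))).mul_left ((l : ℝ) ^ l)))
    rw [tsum_fintype]
    calc ∑ w : SWord l (m + l),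
          ‖∏ j, x j ^ (kcount w.1 j - 1) / (Nat.factorial (kcount w.1 j - 1) : ℝ)‖
        ≤ ∑ _w : SWord l (m + l), (‖x‖ + 1) ^ m * ((l : ℝ) ^ m / Nat.factorial m) := by
          refine Finset.sum_le_sum fun w _ => ?_
          rw [Real.norm_eq_abs]
          exact term_bound hl x w.1 w.2.2 rfl
      _ = (Fintype.card (SWord l (m + l)) : ℝ)
            * ((‖x‖ + 1) ^ m * ((l : ℝ) ^ m / Nat.factorial m)) := by
          rw [Finset.sum_const, nsmul_eq_mul, Finset.card_univ]
      _ ≤ (l : ℝ) ^ (m + l) * ((‖x‖ + 1) ^ m * ((l : ℝ) ^ m / Nat.factorial m)) := by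
          refine mul_le_mul_of_nonneg_right ?_ (by positivity)
          rw [← Nat.card_eq_fintype_card]
          exact card_sword_le l (m + l)
      _ = (l : ℝ) ^ l * (((l : ℝ) ^ 2 * (‖x‖ + 1)) ^ m / Nat.factorial m) := by
          have hp : (((l : ℝ) ^ 2) : ℝ) ^ m = (l : ℝ) ^ m * (l : ℝ) ^ m := by
            rw [← pow_mul, two_mul, pow_add]
          have hfact : (Nat.factorial m : ℝ) ≠ 0 := by positivity
          rw [pow_add, mul_pow, hp]
          field_simp

set_option maxHeartbeats 1000000 in
private lemma hasSum_cm (l : ℕ) (hl : 0 < l) (x : Fin l → ℝ) :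
    HasSum (fun m : ℕ => (cmSeries l m) fun _ => x) (contMultinomial l x) := by
  have hs := summable_T l hl x
  have h1 : HasSum (fun p : Σ n : ℕ, SWord l n =>
      ∏ j, x j ^ (kcount p.2.1 j - 1) / (Nat.factorial (kcount p.2.1 j - 1) : ℝ))
      (contMultinomial l x) := by
    rw [contMultinomial]
    exact hs.hasSum
  have h2 : HasSum (fun n : ℕ => ∑ w : SWord l n,
      ∏ j, x j ^ (kcount w.1 j - 1) / (Nat.factorial (kcount w.1 j - 1) : ℝ))
      (contMultinomial l x) :=
    h1.sigma fun n => hasSum_fintype _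
  have hinj : Function.Injective (fun m : ℕ => m + l) := fun a b h =>
    Nat.add_right_cancel h
  have h3 : HasSum (fun m : ℕ => ∑ w : SWord l (m + l),
      ∏ j, x j ^ (kcount w.1 j - 1) / (Nat.factorial (kcount w.1 j - 1) : ℝ))
      (contMultinomial l x) := by
    refine (Function.Injective.hasSum_iff hinj ?_).mpr h2
    intro n hn
    have hnl : n < l := by
      rcases le_or_gt l n with h | h
      · exact absurd ⟨n - l, show n - l + l = n by omega⟩ hn
      · exact h
    exact Finset.sum_eq_zero fun w _ => ((sword_isEmpty hnl).elim w)
  have heq : (fun m : ℕ => (cmSeries l m) fun _ => x)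
      = fun m : ℕ => ∑ w : SWord l (m + l),
        ∏ j, x j ^ (kcount w.1 j - 1) / (Nat.factorial (kcount w.1 j - 1) : ℝ) := by
    funext m
    exact cmSeries_apply l m x
  rw [heq]
  exact h3

end Aux

/-- For every integer `l ≥ 2`, the continuous multinomial coefficient
`x ↦ {x}` is a real-analytic function on `ℝ^l`. -/
theorem contMultinomial_analytic (l : ℕ) (hl : 2 ≤ l) :
    AnalyticOnNhd ℝ (fun x : Fin l → ℝ => contMultinomial l x) Set.univ := by
  have hl0 : 0 < l := by omega
  have hball : HasFPowerSeriesOnBall (fun x : Fin l → ℝ => contMultinomial l x)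
      (cmSeries l) 0 ⊤ :=
    { r_le := by rw [radius_cm l hl0]
      r_pos := by simp
      hasSum := fun {y} _ => by simpa using hasSum_cm l hl0 y }
  have h := hball.analyticOnNhd
  rwa [Metric.emetric_ball_top] at h
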